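/- arXiv:0711.3072 — 5 statements merged into one kernel-verified Lean document; each statement's English description precedes it below -/
import Mathlib

section
/- Let x : [0,∞) → ℝⁿ be continuous with x(0) = x₀, and suppose for every s ≥ 0, sup{|x(t; x₀)| : t ≥ 0, |x₀| ≤ s} < ∞ (uniform boundedness over bounded initial sets). Then there exist a continuous positive function μ : [0,∞) → (0,∞) and a function ã of class K∞ (continuous, strictly increasing, ã(0)=0, unbounded) such that |x(t; x₀)| ≤ μ(t)·ã(|x₀|) for all t ≥ 0 and all x₀ ∈ ℝⁿ. -/
open Set Filter

set_option maxHeartbeats 1000000 in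
theorem uniform_bound_factorization
    {n : ℕ} (x : ℝ → EuclideanSpace ℝ (Fin n) → EuclideanSpace ℝ (Fin n))
    (hcont : Continuous fun p : ℝ × EuclideanSpace ℝ (Fin n) => x p.1 p.2)
    (hinit : ∀ x₀, x 0 x₀ = x₀)
    (hzero : ∀ t, 0 ≤ t → x t 0 = 0)
    (hbdd : ∀ s : ℝ, 0 ≤ s →
      ∃ C : ℝ, ∀ t, 0 ≤ t → ∀ x₀, ‖x₀‖ ≤ s → ‖x t x₀‖ ≤ C) :
    ∃ μ : ℝ → ℝ, Continuous μ ∧ (∀ t, 0 < μ t) ∧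
      ∃ a : ℝ → ℝ, Continuous a ∧ StrictMonoOn a (Ici 0) ∧ a 0 = 0 ∧
        Tendsto a atTop atTop ∧
        ∀ t, 0 ≤ t → ∀ x₀, ‖x t x₀‖ ≤ μ t * a ‖x₀‖ := by
  classical
  have hzero00 : x 0 0 = 0 := hzero 0 le_rfl
  set A : ℝ → Set ℝ := fun s =>
    (fun p : ℝ × EuclideanSpace ℝ (Fin n) => ‖x p.1 p.2‖ / (1 + p.1)) ''
      {p | 0 ≤ p.1 ∧ ‖p.2‖ ≤ s} with hAdef
  have hA_bdd : ∀ s : ℝ, BddAbove (A s) := by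
    intro s
    obtain ⟨C, hC⟩ := hbdd (max s 0) (le_max_right _ _)
    refine ⟨C, ?_⟩
    rintro y ⟨⟨t, x₀⟩, ⟨ht, hx₀⟩, rfl⟩
    have h1 : ‖x t x₀‖ ≤ C := hC t ht x₀ (hx₀.trans (le_max_left _ _))
    have h2 : ‖x t x₀‖ / (1 + t) ≤ ‖x t x₀‖ :=
      div_le_self (norm_nonneg _) (by linarith)
    exact h2.trans h1
  have hA_mem : ∀ s : ℝ, ∀ t, 0 ≤ t → ∀ x₀ : EuclideanSpace ℝ (Fin n), ‖x₀‖ ≤ s →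
      ‖x t x₀‖ / (1 + t) ∈ A s := fun s t ht x₀ hx₀ => ⟨(t, x₀), ⟨ht, hx₀⟩, rfl⟩
  set a₀ : ℝ → ℝ := fun s => sSup (A s) with ha₀def
  have hzmem : ∀ s : ℝ, 0 ≤ s → (0:ℝ) ∈ A s := by
    intro s hs
    refine ⟨(0, 0), ⟨le_rfl, by simpa using hs⟩, ?_⟩
    simp [hzero00]
  have hle : ∀ t, 0 ≤ t → ∀ x₀, ‖x t x₀‖ / (1 + t) ≤ a₀ ‖x₀‖ := fun t ht x₀ =>
    le_csSup (hA_bdd _) (hA_mem _ t ht x₀ le_rfl)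
  have ha₀_nonneg : ∀ s : ℝ, 0 ≤ a₀ s := by
    intro s
    rcases le_or_gt 0 s with hs | hs
    · exact le_csSup (hA_bdd s) (hzmem s hs)
    · have hA : A s = ∅ := by
        apply eq_empty_iff_forall_notMem.2
        rintro y ⟨⟨t, x₀⟩, ⟨ht, hx₀⟩, rfl⟩
        exact absurd (le_trans (norm_nonneg x₀) hx₀) (not_le.2 hs)
      simp [ha₀def, hA, Real.sSup_empty]
  have ha₀_zero : ∀ s : ℝ, s ≤ 0 → a₀ s = 0 := by
    intro s hs
    rcases lt_or_eq_of_le hs with hs' | hs'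
    · have hA : A s = ∅ := by
        apply eq_empty_iff_forall_notMem.2
        rintro y ⟨⟨t, x₀⟩, ⟨ht, hx₀⟩, rfl⟩
        exact absurd (le_trans (norm_nonneg x₀) hx₀) (not_le.2 hs')
      simp [ha₀def, hA, Real.sSup_empty]
    · subst hs'
      refine le_antisymm ?_ (ha₀_nonneg 0)
      apply csSup_le ⟨0, hzmem 0 le_rfl⟩
      rintro y ⟨⟨t, x₀⟩, ⟨ht, hx₀⟩, rfl⟩
      have hx0 : x₀ = 0 := norm_le_zero_iff.1 hx₀
      subst hx0
      show ‖x t 0‖ / (1 + t) ≤ 0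
      rw [hzero t ht, norm_zero, zero_div]
  have ha₀_mono : Monotone a₀ := by
    intro s s' hss'
    rcases (A s).eq_empty_or_nonempty with hA | hA
    · rw [ha₀def]; simp only; rw [hA, Real.sSup_empty]; exact ha₀_nonneg s'
    · apply csSup_le_csSup (hA_bdd s') hA
      rintro y ⟨⟨t, x₀⟩, ⟨ht, hx₀⟩, rfl⟩
      exact ⟨(t, x₀), ⟨ht, hx₀.trans hss'⟩, rfl⟩
  obtain ⟨G, hG⟩ := hbdd 1 zero_le_one
  have hG0 : 0 ≤ G := le_trans (norm_nonneg _) (hG 0 le_rfl 0 (by simp))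
  have hsmall : ∀ ε : ℝ, 0 < ε → ∃ δ : ℝ, 0 < δ ∧ a₀ δ ≤ ε := by
    intro ε hε
    set T : ℝ := G / ε with hT
    have hT0 : 0 ≤ T := div_nonneg hG0 hε.le
    have hεT : ε * T = G := by
      rw [hT]; field_simp
    have hUopen : IsOpen ((fun p : ℝ × EuclideanSpace ℝ (Fin n) => ‖x p.1 p.2‖) ⁻¹' Iio ε) :=
      isOpen_Iio.preimage hcont.norm
    have hsub : Icc (0:ℝ) T ×ˢ ({0} : Set (EuclideanSpace ℝ (Fin n))) ⊆
        (fun p : ℝ × EuclideanSpace ℝ (Fin n) => ‖x p.1 p.2‖) ⁻¹' Iio ε := by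
      rintro ⟨t, x₀⟩ ⟨ht, hx₀⟩
      simp only [mem_singleton_iff] at hx₀
      subst hx₀
      simp only [mem_preimage, mem_Iio]
      rw [hzero t ht.1, norm_zero]; exact hε
    obtain ⟨u, v, hu, hv, hsu, htv, huv⟩ :=
      generalized_tube_lemma isCompact_Icc isCompact_singleton hUopen hsub
    obtain ⟨δ, hδ0, hδ⟩ := Metric.isOpen_iff.1 hv 0 (htv rfl)
    refine ⟨min (δ/2) 1, by positivity, ?_⟩
    apply csSup_le ⟨0, hzmem _ (by positivity)⟩
    rintro y ⟨⟨t, x₀⟩, ⟨ht, hx₀⟩, rfl⟩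
    have h1t : (0:ℝ) < 1 + t := by linarith
    by_cases hcase : t ≤ T
    · have hmemv : x₀ ∈ v := by
        apply hδ
        rw [Metric.mem_ball, dist_zero_right]
        calc ‖x₀‖ ≤ min (δ/2) 1 := hx₀
          _ ≤ δ/2 := min_le_left _ _
          _ < δ := by linarith
      have hlt : ‖x t x₀‖ < ε := by
        have := huv (Set.mk_mem_prod (hsu ⟨ht, hcase⟩) hmemv)
        simpa using this
      calc ‖x t x₀‖ / (1 + t) ≤ ‖x t x₀‖ := div_le_self (norm_nonneg _) (by linarith)
        _ ≤ ε := hlt.le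
    · push_neg at hcase
      have hb : ‖x t x₀‖ ≤ G := hG t ht x₀ (hx₀.trans (min_le_right _ _))
      have h1 : ‖x t x₀‖ / (1 + t) ≤ G / (1 + T) :=
        div_le_div₀ hG0 hb (by linarith) (by linarith)
      have h2 : G / (1 + T) ≤ ε := by
        rw [div_le_iff₀ (by linarith)]
        nlinarith
      exact h1.trans h2
  set a₂ : ℝ → ℝ := fun s => ∫ u in (1:ℝ)..2, a₀ (s * u) with ha₂def
  have hmono_int : ∀ s : ℝ,
      IntervalIntegrable (fun u => a₀ (s * u)) MeasureTheory.volume 1 2 := by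
    intro s
    rcases le_or_gt 0 s with hs | hs
    · apply MonotoneOn.intervalIntegrable
      intro u _ v _ huv
      exact ha₀_mono (mul_le_mul_of_nonneg_left huv hs)
    · apply AntitoneOn.intervalIntegrable
      intro u _ v _ huv
      exact ha₀_mono (mul_le_mul_of_nonpos_left huv hs.le)
  have ha₂_mono : Monotone a₂ := by
    intro s s' h
    apply intervalIntegral.integral_mono_on one_le_two (hmono_int s) (hmono_int s')
    intro u hu
    exact ha₀_mono (mul_le_mul_of_nonneg_right h (by linarith [hu.1]))
  have ha₂_nonneg : ∀ s : ℝ, 0 ≤ a₂ s := fun s =>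
    intervalIntegral.integral_nonneg one_le_two fun u _ => ha₀_nonneg _
  have ha₀_le_a₂ : ∀ s : ℝ, 0 ≤ s → a₀ s ≤ a₂ s := by
    intro s hs
    have h0 : a₀ s = ∫ _ in (1:ℝ)..2, a₀ s := by
      rw [intervalIntegral.integral_const]; norm_num
    rw [h0]
    apply intervalIntegral.integral_mono_on one_le_two
      intervalIntegrable_const (hmono_int s)
    intro u hu
    exact ha₀_mono (le_mul_of_one_le_right hs hu.1)
  have ha₂_le : ∀ s : ℝ, 0 ≤ s → a₂ s ≤ a₀ (2 * s) := by
    intro s hs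
    have h0 : a₀ (2 * s) = ∫ _ in (1:ℝ)..2, a₀ (2 * s) := by
      rw [intervalIntegral.integral_const]; norm_num
    rw [h0]
    apply intervalIntegral.integral_mono_on one_le_two (hmono_int s)
      intervalIntegrable_const
    intro u hu
    exact ha₀_mono (by nlinarith [hu.2])
  have ha₂_zero : ∀ s : ℝ, s ≤ 0 → a₂ s = 0 := by
    intro s hs
    have : a₂ s = ∫ _ in (1:ℝ)..2, (0:ℝ) := by
      apply intervalIntegral.integral_congr
      intro u hu
      rw [uIcc_of_le one_le_two] at hu
      exact ha₀_zero _ (by nlinarith [hu.1])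
    rw [this]; simp
  have hIntAll : ∀ a b : ℝ, IntervalIntegrable a₀ MeasureTheory.volume a b :=
    fun a b => ha₀_mono.intervalIntegrable
  have hP : Continuous fun y : ℝ => ∫ u in (0:ℝ)..y, a₀ u :=
    intervalIntegral.continuous_primitive hIntAll 0
  have hformula : ∀ s : ℝ, s ≠ 0 →
      a₂ s = s⁻¹ * ((∫ u in (0:ℝ)..(s*2), a₀ u) - ∫ u in (0:ℝ)..(s*1), a₀ u) := by
    intro s hs
    have h1 : (∫ u in (1:ℝ)..2, a₀ (s * u)) = s⁻¹ • ∫ u in (s*1)..(s*2), a₀ u :=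
      intervalIntegral.integral_comp_mul_left a₀ hs
    rw [ha₂def]
    simp only
    rw [h1, intervalIntegral.integral_interval_sub_left (hIntAll 0 (s*2)) (hIntAll 0 (s*1)),
      smul_eq_mul]
  have hc2 : Continuous a₂ := by
    rw [continuous_iff_continuousAt]
    intro s₀
    rcases eq_or_ne s₀ 0 with rfl | hs₀
    · rw [ContinuousAt, ha₂_zero 0 le_rfl, Metric.tendsto_nhds]
      intro ε hε
      obtain ⟨δ, hδ0, hδ⟩ := hsmall (ε/2) (by positivity)
      refine Metric.eventually_nhds_iff.2 ⟨δ/2, by positivity, ?_⟩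
      intro s hs
      rw [Real.dist_eq, sub_zero] at hs ⊢
      rcases le_or_gt s 0 with h | h
      · rw [ha₂_zero s h]; simpa using hε
      · have h1 : a₂ s ≤ a₀ (2*s) := ha₂_le s h.le
        have h2 : a₀ (2*s) ≤ a₀ δ := by
          apply ha₀_mono
          rw [abs_of_pos h] at hs; linarith
        rw [abs_of_nonneg (ha₂_nonneg s)]
        calc a₂ s ≤ ε/2 := le_trans h1 (le_trans h2 hδ)
          _ < ε := by linarith
    · have hca : ContinuousAt
          (fun s : ℝ => s⁻¹ * ((∫ u in (0:ℝ)..(s*2), a₀ u) - ∫ u in (0:ℝ)..(s*1), a₀ u)) s₀ := by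
        apply ContinuousAt.mul
        · exact continuousAt_inv₀ hs₀
        · apply ContinuousAt.sub
          · exact (hP.comp (continuous_id.mul continuous_const)).continuousAt
          · exact (hP.comp (continuous_id.mul continuous_const)).continuousAt
      apply hca.congr
      have hopen : {s : ℝ | s ≠ 0} ∈ nhds s₀ := isOpen_ne.mem_nhds hs₀
      filter_upwards [hopen] with s hs
      exact (hformula s hs).symm
  refine ⟨fun t => 1 + |t|, by continuity, fun t => by positivity,
    fun s => s + a₂ s, continuous_id.add hc2,
    (strictMono_id.add_monotone ha₂_mono).strictMonoOn _, by simp [ha₂_zero 0 le_rfl], ?_, ?_⟩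
  · apply tendsto_atTop_mono (fun s => le_add_of_nonneg_right (ha₂_nonneg s)) tendsto_id
  · intro t ht x₀
    have h1 : ‖x t x₀‖ / (1 + t) ≤ a₀ ‖x₀‖ := hle t ht x₀
    have h2 : a₀ ‖x₀‖ ≤ a₂ ‖x₀‖ := ha₀_le_a₂ _ (norm_nonneg _)
    have h1t : (0:ℝ) < 1 + t := by linarith
    rw [div_le_iff₀ h1t] at h1
    have habs : |t| = t := abs_of_nonneg ht
    calc ‖x t x₀‖ ≤ a₀ ‖x₀‖ * (1 + t) := h1
      _ ≤ (‖x₀‖ + a₂ ‖x₀‖) * (1 + t) := by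
          apply mul_le_mul_of_nonneg_right _ h1t.le
          have := norm_nonneg x₀
          linarith
      _ = (1 + |t|) * (‖x₀‖ + a₂ ‖x₀‖) := by rw [habs]; ring
end

section
/- With V(x) = (1/2)x₁² + (1/2)(x₂+5x₁)² and feedback k̃(x) = −421x₁ − 89x₂ + (5/2)x₁³, for all z, x ∈ ℝ², all d₁,d₂ ∈ [−1,1]: ∇V(z)·f(d,z,k̃(x)) ≤ −(3/2)z₁² − 2(z₂+5z₁)² + (421² + (225/16)(z₁² + x₁²)²)|z₁−x₁|² + 89²|z₂−x₂|², where f(d,z,u) = (d₁z₁ + (3/2)d₂z₁² − (1/2)z₁³ + z₂, u). -/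
set_option maxHeartbeats 1600000 in
theorem jet_engine_emulation_estimate
    (z₁ z₂ x₁ x₂ d₁ d₂ : ℝ) (hd₁ : d₁ ∈ Set.Icc (-1 : ℝ) 1) (hd₂ : d₂ ∈ Set.Icc (-1 : ℝ) 1) :
    (z₁ + 5 * (z₂ + 5 * z₁)) * (d₁ * z₁ + 3 / 2 * d₂ * z₁ ^ 2 - 1 / 2 * z₁ ^ 3 + z₂)
      + (z₂ + 5 * z₁) * (-421 * x₁ - 89 * x₂ + 5 / 2 * x₁ ^ 3)
    ≤ -(3 / 2) * z₁ ^ 2 - 2 * (z₂ + 5 * z₁) ^ 2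
      + (421 ^ 2 + 225 / 16 * (z₁ ^ 2 + x₁ ^ 2) ^ 2) * (z₁ - x₁) ^ 2
      + 89 ^ 2 * (z₂ - x₂) ^ 2 := by
  obtain ⟨h1, h2⟩ := hd₁
  obtain ⟨h3, h4⟩ := hd₂
  have y : ℝ := 0
  have hp1 : (0:ℝ) ≤ (1 + d₁) := by linarith
  have hp2 : (0:ℝ) ≤ (1 - d₁) := by linarith
  have hp3 : (0:ℝ) ≤ (1 + d₂) := by linarith
  have hp4 : (0:ℝ) ≤ (1 - d₂) := by linarith
  -- d₁ z₁² ≤ z₁²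
  have A1 : d₁ * z₁ ^ 2 ≤ z₁ ^ 2 := by nlinarith [mul_nonneg hp2 (sq_nonneg z₁)]
  -- (3/2) d₂ z₁³ ≤ ¼z₁⁴ + 9/4 z₁²
  have A2 : 3 / 2 * d₂ * z₁ ^ 3 ≤ 1 / 4 * z₁ ^ 4 + 9 / 4 * z₁ ^ 2 := by
    nlinarith [mul_nonneg hp3 (sq_nonneg (z₁ ^ 2 / 2 - 3 / 2 * z₁)),
      mul_nonneg hp4 (sq_nonneg (z₁ ^ 2 / 2 + 3 / 2 * z₁))]
  -- 5 d₁ (z₂+5z₁) z₁ ≤ ¼z₁² + 25 y²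
  have A3 : 5 * d₁ * (z₂ + 5 * z₁) * z₁ ≤ 1 / 4 * z₁ ^ 2 + 25 * (z₂ + 5 * z₁) ^ 2 := by
    nlinarith [mul_nonneg hp1 (sq_nonneg (z₁ / 2 - 5 * (z₂ + 5 * z₁))),
      mul_nonneg hp2 (sq_nonneg (z₁ / 2 + 5 * (z₂ + 5 * z₁)))]
  -- (15/2) d₂ y z₁² ≤ ¼z₁⁴ + 225/4 y²
  have A4 : 15 / 2 * d₂ * (z₂ + 5 * z₁) * z₁ ^ 2 ≤ 1 / 4 * z₁ ^ 4 + 225 / 4 * (z₂ + 5 * z₁) ^ 2 := by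
    nlinarith [mul_nonneg hp3 (sq_nonneg (z₁ ^ 2 / 2 - 15 / 2 * (z₂ + 5 * z₁))),
      mul_nonneg hp4 (sq_nonneg (z₁ ^ 2 / 2 + 15 / 2 * (z₂ + 5 * z₁)))]
  -- 421 y e₁ ≤ 421² e₁² + ¼ y²
  have B1 : 421 * (z₂ + 5 * z₁) * (z₁ - x₁) ≤ 421 ^ 2 * (z₁ - x₁) ^ 2 + 1 / 4 * (z₂ + 5 * z₁) ^ 2 := by
    nlinarith [sq_nonneg (421 * (z₁ - x₁) - (z₂ + 5 * z₁) / 2)]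
  have B2 : 89 * (z₂ + 5 * z₁) * (z₂ - x₂) ≤ 89 ^ 2 * (z₂ - x₂) ^ 2 + 1 / 4 * (z₂ + 5 * z₁) ^ 2 := by
    nlinarith [sq_nonneg (89 * (z₂ - x₂) - (z₂ + 5 * z₁) / 2)]
  -- −(5/2) y e₁ Q ≤ ¼ y² + 25/4 Q² e₁²
  have B3 : -(5 / 2) * (z₂ + 5 * z₁) * (z₁ - x₁) * (z₁ ^ 2 + z₁ * x₁ + x₁ ^ 2)
      ≤ 1 / 4 * (z₂ + 5 * z₁) ^ 2
        + 25 / 4 * (z₁ ^ 2 + z₁ * x₁ + x₁ ^ 2) ^ 2 * (z₁ - x₁) ^ 2 := by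
    nlinarith [sq_nonneg (5 / 2 * (z₁ ^ 2 + z₁ * x₁ + x₁ ^ 2) * (z₁ - x₁) + (z₂ + 5 * z₁) / 2)]
  -- Q² ≤ (9/4)(z₁²+x₁²)²
  have hq1 : (0:ℝ) ≤ 3 / 2 * (z₁ ^ 2 + x₁ ^ 2) - (z₁ ^ 2 + z₁ * x₁ + x₁ ^ 2) := by
    nlinarith [sq_nonneg (z₁ - x₁)]
  have hq2 : (0:ℝ) ≤ 3 / 2 * (z₁ ^ 2 + x₁ ^ 2) + (z₁ ^ 2 + z₁ * x₁ + x₁ ^ 2) := by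
    nlinarith [sq_nonneg (z₁ + x₁)]
  have B4 : (z₁ ^ 2 + z₁ * x₁ + x₁ ^ 2) ^ 2 ≤ 9 / 4 * (z₁ ^ 2 + x₁ ^ 2) ^ 2 := by
    nlinarith [mul_nonneg hq1 hq2]
  have hB4' : 25 / 4 * (z₁ ^ 2 + z₁ * x₁ + x₁ ^ 2) ^ 2 * (z₁ - x₁) ^ 2
      ≤ 225 / 16 * (z₁ ^ 2 + x₁ ^ 2) ^ 2 * (z₁ - x₁) ^ 2 := by
    have := mul_le_mul_of_nonneg_right B4 (sq_nonneg (z₁ - x₁))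
    nlinarith [this]
  linarith [A1, A2, A3, A4, B1, B2, B3, hB4']
end

section
/- Let a : ℝ → ℝ be locally Lipschitz with a(0) = 0 and a(x) > 0 for all x ≠ 0, and let L > 0 satisfy a(x) ≤ Lx for all x ∈ [0,2]. Fix x₀ ∈ (0,2) and consider the solution of ẋ = a(x) − (L+1)x₀ with x(0) = x₀ on [0, 1/(L+1)]. Then 0 ≤ x(t) ≤ (1−t)x₀ for all t ∈ [0, 1/(L+1)]; in particular x(t) ∈ (−∞, 2) and |x(t)| ≤ e^{−t}|x₀| on this interval. -/
open Set

theorem scalar_sampling_interval_estimate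
    (a : ℝ → ℝ) (ha : LocallyLipschitz a) (ha0 : a 0 = 0)
    (hapos : ∀ y : ℝ, y ≠ 0 → 0 < a y)
    (L : ℝ) (hL : 0 < L) (hLip : ∀ y ∈ Icc (0 : ℝ) 2, a y ≤ L * y)
    (x₀ : ℝ) (hx₀ : x₀ ∈ Ioo (0 : ℝ) 2)
    (x : ℝ → ℝ) (hinit : x 0 = x₀)
    (hsol : ∀ t ∈ Icc (0 : ℝ) (1 / (L + 1)),
      HasDerivAt x (a (x t) - (L + 1) * x₀) t) :
    ∀ t ∈ Icc (0 : ℝ) (1 / (L + 1)),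
      0 ≤ x t ∧ x t ≤ (1 - t) * x₀ ∧ x t < 2 ∧ |x t| ≤ Real.exp (-t) * |x₀| := by
  obtain ⟨hx₀0, hx₀2⟩ := hx₀
  set T : ℝ := 1 / (L + 1) with hTdef
  have hL1 : (0:ℝ) < L + 1 := by linarith
  have hT : 0 < T := by positivity
  have ha_nonneg : ∀ y : ℝ, 0 ≤ a y := by
    intro y
    rcases eq_or_ne y 0 with h | h
    · simp [h, ha0]
    · exact (hapos y h).le
  have hcont : ContinuousOn x (Icc 0 T) := fun t ht =>
    (hsol t ht).continuousAt.continuousWithinAt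
  -- Lower bound: x t ≥ (1 - (L+1) t) * x₀
  have hlow : ∀ t ∈ Icc (0:ℝ) T, (1 - (L + 1) * t) * x₀ ≤ x t := by
    have key : ∀ ⦃t⦄, t ∈ Icc (0:ℝ) T →
        (fun s => -x s) t ≤ (fun s => ((L + 1) * s - 1) * x₀) t := by
      apply image_le_of_deriv_right_le_deriv_boundary
        (f := fun s => -x s) (f' := fun s => -(a (x s) - (L + 1) * x₀))
        (a := (0:ℝ)) (b := T)
        (B := fun s => ((L + 1) * s - 1) * x₀) (B' := fun s => (L + 1) * x₀)
      · exact hcont.neg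
      · intro s hs
        exact ((hsol s (Ico_subset_Icc_self hs)).neg).hasDerivWithinAt
      · simp [hinit]
      · exact (Continuous.continuousOn (by continuity))
      · intro s hs
        have : HasDerivAt (fun s : ℝ => ((L + 1) * s - 1) * x₀) ((L + 1) * x₀) s := by
          have h1 : HasDerivAt (fun s : ℝ => (L + 1) * s - 1) (L + 1) s := by
            simpa using (((hasDerivAt_id s).const_mul (L + 1)).sub_const 1)
          simpa using h1.mul_const x₀
        exact this.hasDerivWithinAt
      · intro s hs
        have := ha_nonneg (x s)
        linarith
    intro t ht
    have := key ht
    dsimp at this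
    linarith
  have hxt0 : ∀ t ∈ Icc (0:ℝ) T, 0 ≤ x t := by
    intro t ht
    obtain ⟨ht0, htT⟩ := ht
    have h1 : (L + 1) * t ≤ 1 := by
      rw [hTdef] at htT
      calc (L + 1) * t ≤ (L + 1) * (1 / (L + 1)) := by
            exact mul_le_mul_of_nonneg_left htT hL1.le
        _ = 1 := by field_simp
    have : 0 ≤ (1 - (L + 1) * t) * x₀ := mul_nonneg (by linarith) hx₀0.le
    linarith [hlow t ⟨ht0, htT⟩]
  -- Upper bound: x t ≤ (1 - t) * x₀
  have hup : ∀ t ∈ Icc (0:ℝ) T, x t ≤ (1 - t) * x₀ := by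
    intro t ht
    apply le_of_forall_pos_le_add
    intro c hc
    set E : ℝ := Real.exp ((L + 1) * T) with hE
    have hEpos : 0 < E := Real.exp_pos _
    set ε : ℝ := min ((2 - x₀) / E) (c / E) with hε
    have hεpos : 0 < ε := lt_min (div_pos (by linarith) hEpos) (div_pos hc hEpos)
    have key : ∀ ⦃s⦄, s ∈ Icc (0:ℝ) T →
        x s ≤ (fun s => (1 - s) * x₀ + ε * Real.exp ((L + 1) * s)) s := by
      apply image_le_of_deriv_right_lt_deriv_boundary
        (f := x) (f' := fun s => a (x s) - (L + 1) * x₀)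
        (a := (0:ℝ)) (b := T)
        (B := fun s => (1 - s) * x₀ + ε * Real.exp ((L + 1) * s))
        (B' := fun s => -x₀ + ε * ((L + 1) * Real.exp ((L + 1) * s)))
      · exact hcont
      · intro s hs
        exact (hsol s (Ico_subset_Icc_self hs)).hasDerivWithinAt
      · simp [hinit]
        linarith [hεpos]
      · intro s
        have h1 : HasDerivAt (fun s : ℝ => (1 - s) * x₀) (-x₀) s := by
          have : HasDerivAt (fun s : ℝ => 1 - s) (-1) s := by
            exact ((hasDerivAt_const s (1:ℝ)).sub (hasDerivAt_id' s)).congr_deriv (by ring)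
          simpa using this.mul_const x₀
        have h2 : HasDerivAt (fun s : ℝ => ε * Real.exp ((L + 1) * s))
            (ε * ((L + 1) * Real.exp ((L + 1) * s))) s := by
          have h3 : HasDerivAt (fun s : ℝ => (L + 1) * s) (L + 1) s := by
            simpa using (hasDerivAt_id s).const_mul (L + 1)
          have h4 := h3.exp
          have := h4.const_mul ε
          exact this.congr_deriv (by ring)
        exact h1.add h2
      · intro s hs hb
        have hs0 : 0 ≤ s := hs.1
        have hsT : s ≤ T := hs.2.le
        have hexp : Real.exp ((L + 1) * s) ≤ E := by
          rw [hE]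
          exact Real.exp_le_exp.2 (mul_le_mul_of_nonneg_left hsT hL1.le)
        have hexpos : 0 < Real.exp ((L + 1) * s) := Real.exp_pos _
        have hεE : ε * Real.exp ((L + 1) * s) ≤ 2 - x₀ := by
          have h1 : ε ≤ (2 - x₀) / E := min_le_left _ _
          calc ε * Real.exp ((L + 1) * s) ≤ ε * E :=
                mul_le_mul_of_nonneg_left hexp hεpos.le
            _ ≤ (2 - x₀) / E * E := mul_le_mul_of_nonneg_right h1 hEpos.le
            _ = 2 - x₀ := by field_simp
        have hx2 : x s ≤ 2 := by
          rw [hb]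
          nlinarith
        have hxLip := hLip (x s) ⟨hxt0 s ⟨hs0, hsT⟩, hx2⟩
        rw [hb] at hxLip
        show a (x s) - (L + 1) * x₀ < -x₀ + ε * ((L + 1) * Real.exp ((L + 1) * s))
        rw [hb]
        nlinarith [mul_pos hεpos hexpos, mul_nonneg (mul_nonneg hL.le hs0) hx₀0.le, hexpos, hεpos]
    have := key ht
    dsimp at this
    have hexp : Real.exp ((L + 1) * t) ≤ E := by
      rw [hE]; exact Real.exp_le_exp.2 (mul_le_mul_of_nonneg_left ht.2 hL1.le)
    have h1 : ε ≤ c / E := min_le_right _ _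
    have : ε * Real.exp ((L + 1) * t) ≤ c := by
      calc ε * Real.exp ((L + 1) * t) ≤ ε * E :=
            mul_le_mul_of_nonneg_left hexp hεpos.le
        _ ≤ c / E * E := mul_le_mul_of_nonneg_right h1 hEpos.le
        _ = c := by field_simp
    linarith [key ht]
  -- Conclusion
  intro t ht
  have h0 := hxt0 t ht
  have h1 := hup t ht
  have h2 : x t < 2 := by nlinarith [ht.1, hx₀0]
  refine ⟨h0, h1, h2, ?_⟩
  rw [abs_of_nonneg h0, abs_of_nonneg hx₀0.le]
  have h3 : 1 - t ≤ Real.exp (-t) := by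
    have := Real.add_one_le_exp (-t)
    linarith
  calc x t ≤ (1 - t) * x₀ := h1
    _ ≤ Real.exp (-t) * x₀ := mul_le_mul_of_nonneg_right h3 hx₀0.le
end

section
/- Let ρ : [0,∞) → [0,∞) be continuous and positive definite (ρ(0)=0, ρ(s)>0 for s>0), and let y : [t₀, t₁] → [0,∞) be absolutely continuous with ẏ(t) ≤ −ρ(y(t)) almost everywhere. Let σ(s, t) be the flow of the scalar ODE ∂σ/∂t = −ρ(σ), σ(s,0) = s (assumed to exist for all t ≥ 0). Then y(t) ≤ σ(y(t₀), t − t₀) for all t ∈ [t₀, t₁]. -/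
open Set

private lemma antitoneOn_of_hasDerivAt_nonpos' {f f' : ℝ → ℝ} {a b : ℝ}
    (hf : ∀ t ∈ Set.Icc a b, HasDerivAt f (f' t) t)
    (h0 : ∀ t ∈ Set.Icc a b, f' t ≤ 0) : AntitoneOn f (Set.Icc a b) := by
  apply antitoneOn_of_deriv_nonpos (convex_Icc a b)
  · exact fun t htI => (hf t htI).continuousAt.continuousWithinAt
  · rw [interior_Icc]
    exact fun t htI => (hf t (Ioo_subset_Icc_self htI)).differentiableAt.differentiableWithinAt
  · rw [interior_Icc]
    intro t htI
    rw [(hf t (Ioo_subset_Icc_self htI)).deriv]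
    exact h0 t (Ioo_subset_Icc_self htI)

private lemma monotoneOn_of_hasDerivAt_nonneg' {f f' : ℝ → ℝ} {a b : ℝ}
    (hf : ∀ t ∈ Set.Icc a b, HasDerivAt f (f' t) t)
    (h0 : ∀ t ∈ Set.Icc a b, 0 ≤ f' t) : MonotoneOn f (Set.Icc a b) := by
  apply monotoneOn_of_deriv_nonneg (convex_Icc a b)
  · exact fun t htI => (hf t htI).continuousAt.continuousWithinAt
  · rw [interior_Icc]
    exact fun t htI => (hf t (Ioo_subset_Icc_self htI)).differentiableAt.differentiableWithinAt
  · rw [interior_Icc]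
    intro t htI
    rw [(hf t (Ioo_subset_Icc_self htI)).deriv]
    exact h0 t (Ioo_subset_Icc_self htI)

theorem comparison_principle
    (ρ : ℝ → ℝ) (hρcont : Continuous ρ) (hρ0 : ρ 0 = 0)
    (hρpos : ∀ s : ℝ, 0 < s → 0 < ρ s)
    (σ : ℝ → ℝ → ℝ)
    (hσ0 : ∀ s, 0 ≤ s → σ s 0 = s)
    (hσnonneg : ∀ s, 0 ≤ s → ∀ t, 0 ≤ t → 0 ≤ σ s t)
    (hσode : ∀ s, 0 ≤ s → ∀ t, 0 ≤ t → HasDerivAt (σ s) (-ρ (σ s t)) t)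
    (t₀ t₁ : ℝ) (ht : t₀ ≤ t₁)
    (y y' : ℝ → ℝ)
    (hy : ∀ t ∈ Icc t₀ t₁, HasDerivAt y (y' t) t)
    (hynn : ∀ t ∈ Icc t₀ t₁, 0 ≤ y t)
    (hineq : ∀ t ∈ Icc t₀ t₁, y' t ≤ -ρ (y t)) :
    ∀ t ∈ Icc t₀ t₁, y t ≤ σ (y t₀) (t - t₀) := by
  have hy0 : 0 ≤ y t₀ := hynn t₀ ⟨le_refl _, ht⟩
  have hρnn : ∀ u : ℝ, 0 ≤ u → 0 ≤ ρ u := by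
    intro u hu
    rcases hu.eq_or_lt with h | h
    · rw [← h, hρ0]
    · exact (hρpos u h).le
  set v : ℝ → ℝ := fun t => σ (y t₀) (t - t₀) with hvdef
  have hvt0 : v t₀ = y t₀ := by simp [hvdef, hσ0 _ hy0]
  have hvderiv : ∀ t, t₀ ≤ t → HasDerivAt v (-ρ (v t)) t := by
    intro t htt
    have h1 := (hσode (y t₀) hy0 (t - t₀) (by linarith)).comp t
      ((hasDerivAt_id t).sub_const t₀)
    simpa [hvdef, Function.comp_def] using h1
  have hvnn : ∀ t, t₀ ≤ t → 0 ≤ v t := fun t htt => hσnonneg _ hy0 _ (by linarith)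
  -- y is antitone
  have hyanti : AntitoneOn y (Icc t₀ t₁) :=
    antitoneOn_of_hasDerivAt_nonpos' hy
      (fun t htI => (hineq t htI).trans (neg_nonpos.2 (hρnn _ (hynn t htI))))
  have hvanti : AntitoneOn v (Icc t₀ t₁) :=
    antitoneOn_of_hasDerivAt_nonpos' (fun t htI => hvderiv t htI.1)
      (fun t htI => neg_nonpos.2 (hρnn _ (hvnn t htI.1)))
  -- the primitive G of 1/ρ on (0,∞)
  set G : ℝ → ℝ := fun u => ∫ x in (1:ℝ)..u, (ρ x)⁻¹ with hGdef
  have hGderiv : ∀ u : ℝ, 0 < u → HasDerivAt G (ρ u)⁻¹ u := by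
    intro u hu
    have hint : IntervalIntegrable (fun x => (ρ x)⁻¹) MeasureTheory.volume 1 u := by
      apply ContinuousOn.intervalIntegrable
      intro x hx
      have hx0 : 0 < x := lt_of_lt_of_le (lt_min one_pos hu) hx.1
      exact (hρcont.continuousAt.inv₀ (hρpos x hx0).ne').continuousWithinAt
    exact intervalIntegral.integral_hasDerivAt_right hint
      ⟨Set.univ, Filter.univ_mem, (hρcont.measurable.inv.aestronglyMeasurable).restrict⟩
      (hρcont.continuousAt.inv₀ (hρpos u hu).ne')
  have hGmono : StrictMonoOn G (Ioi (0:ℝ)) := by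
    apply strictMonoOn_of_deriv_pos (convex_Ioi 0)
    · exact fun u hu => (hGderiv u hu).continuousAt.continuousWithinAt
    · intro u hu
      rw [interior_Ioi] at hu
      rw [(hGderiv u hu).deriv]
      exact inv_pos.2 (hρpos u hu)
  -- key comparison on intervals where both y and v are positive
  have key : ∀ T, T ∈ Icc t₀ t₁ → (∀ t ∈ Icc t₀ T, 0 < y t) →
      (∀ t ∈ Icc t₀ T, 0 < v t) → y T ≤ v T := by
    intro T hT hypos hvpos
    have hsub : Icc t₀ T ⊆ Icc t₀ t₁ := Icc_subset_Icc le_rfl hT.2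
    have hh : AntitoneOn (fun t => G (y t) + t) (Icc t₀ T) := by
      apply antitoneOn_of_hasDerivAt_nonpos'
        (f' := fun t => (ρ (y t))⁻¹ * y' t + 1)
      · intro t htI
        have := ((hGderiv (y t) (hypos t htI)).comp t (hy t (hsub htI))).add
          (hasDerivAt_id t)
        exact this
      · intro t htI
        have hρy : 0 < ρ (y t) := hρpos _ (hypos t htI)
        have h2 : (ρ (y t))⁻¹ * y' t ≤ (ρ (y t))⁻¹ * (-ρ (y t)) :=
          mul_le_mul_of_nonneg_left (hineq t (hsub htI)) (inv_pos.2 hρy).le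
        have h3 : (ρ (y t))⁻¹ * (-ρ (y t)) = -1 := by
          field_simp
        linarith
    have hk : ∀ t ∈ Icc t₀ T, HasDerivAt (fun t => G (v t) + t)
        ((ρ (v t))⁻¹ * (-ρ (v t)) + 1) t := by
      intro t htI
      have := ((hGderiv (v t) (hvpos t htI)).comp t (hvderiv t htI.1)).add
        (hasDerivAt_id t)
      exact this
    have hkzero : ∀ t ∈ Icc t₀ T, (ρ (v t))⁻¹ * (-ρ (v t)) + 1 = 0 := by
      intro t htI
      have hρv : ρ (v t) ≠ 0 := (hρpos _ (hvpos t htI)).ne'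
      field_simp
      norm_num
    have hkmono : MonotoneOn (fun t => G (v t) + t) (Icc t₀ T) :=
      monotoneOn_of_hasDerivAt_nonneg' hk (fun t htI => (hkzero t htI).ge)
    have ht0mem : t₀ ∈ Icc t₀ T := ⟨le_rfl, hT.1⟩
    have hTmem : T ∈ Icc t₀ T := ⟨hT.1, le_rfl⟩
    have e1 : G (y T) + T ≤ G (y t₀) + t₀ := hh ht0mem hTmem hT.1
    have e2 : G (v t₀) + t₀ ≤ G (v T) + T := hkmono ht0mem hTmem hT.1
    have e3 : G (y T) ≤ G (v T) := by rw [hvt0] at e2; linarith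
    by_contra hcon
    push_neg at hcon
    exact absurd (hGmono (mem_Ioi.2 (hvpos T hTmem)) (mem_Ioi.2 (hypos T hTmem)) hcon)
      (not_lt.2 e3)
  -- main argument
  intro ts hts
  by_contra hcon
  push_neg at hcon
  change v ts < y ts at hcon
  rcases (hvnn ts hts.1).eq_or_lt with hv0 | hv0
  · -- v ts = 0
    have hyts : 0 < y ts := by linarith
    set S : Set ℝ := Icc t₀ ts ∩ v ⁻¹' {0} with hSdef
    have hvcont : ContinuousOn v (Icc t₀ ts) :=
      fun t htI => (hvderiv t htI.1).continuousAt.continuousWithinAt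
    have hSclosed : IsClosed S :=
      hvcont.preimage_isClosed_of_isClosed isClosed_Icc isClosed_singleton
    have htsS : ts ∈ S := ⟨⟨hts.1, le_rfl⟩, by simpa using hv0.symm⟩
    have hSbdd : BddBelow S := ⟨t₀, fun t htS => htS.1.1⟩
    set τ := sInf S with hτdef
    have hτS : τ ∈ S := hSclosed.csInf_mem ⟨ts, htsS⟩ hSbdd
    have hτI : τ ∈ Icc t₀ ts := hτS.1
    have hvτ : v τ = 0 := hτS.2
    have hvposlt : ∀ t ∈ Ico t₀ τ, 0 < v t := by
      intro t htI
      rcases (hvnn t htI.1).eq_or_lt with h0 | h0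
      · exfalso
        have : t ∈ S := ⟨⟨htI.1, htI.2.le.trans hτI.2⟩, by simpa using h0.symm⟩
        exact absurd (csInf_le hSbdd this) (not_le.2 htI.2)
      · exact h0
    have ht0τ : t₀ < τ := by
      rcases hτI.1.eq_or_lt with h | h
      · exfalso
        have : v t₀ = 0 := by rw [h]; exact hvτ
        have hyt0 : y ts ≤ y t₀ := hyanti ⟨le_rfl, ht⟩ ⟨hts.1, hts.2⟩ hts.1
        rw [hvt0] at this
        linarith
      · exact h
    -- find t < τ with v t < y ts
    have hcontτ : ContinuousAt v τ := (hvderiv τ hτI.1).continuousAt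
    have hev : ∀ᶠ s in nhds τ, v s < y ts := by
      have h1 : Filter.Tendsto v (nhds τ) (nhds (v τ)) := hcontτ
      rw [hvτ] at h1
      exact h1.eventually_lt_const hyts
    haveI hne : (nhdsWithin τ (Ioo t₀ τ)).NeBot := right_nhdsWithin_Ioo_neBot ht0τ
    obtain ⟨t, htlt, htmem⟩ :=
      (((hev.filter_mono (nhdsWithin_le_nhds (s := Ioo t₀ τ))).and self_mem_nhdsWithin).exists)
    have htts : t < ts := lt_of_lt_of_le htmem.2 hτI.2
    have htI1 : t ∈ Icc t₀ t₁ := ⟨htmem.1.le, htts.le.trans hts.2⟩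
    have hyle : y t ≤ v t := by
      apply key t htI1
      · intro s hsI
        have : y ts ≤ y s :=
          hyanti ⟨hsI.1, (hsI.2.trans htts.le).trans hts.2⟩ hts (hsI.2.trans htts.le)
        linarith
      · intro s hsI
        exact hvposlt s ⟨hsI.1, lt_of_le_of_lt hsI.2 htmem.2⟩
    have : y ts ≤ y t := hyanti htI1 hts htts.le
    linarith
  · -- 0 < v ts
    have hypos : ∀ t ∈ Icc t₀ ts, 0 < y t := by
      intro t htI
      have : y ts ≤ y t := hyanti ⟨htI.1, htI.2.trans hts.2⟩ hts htI.2
      linarith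
    have hvpos : ∀ t ∈ Icc t₀ ts, 0 < v t := by
      intro t htI
      have : v ts ≤ v t := hvanti ⟨htI.1, htI.2.trans hts.2⟩ hts htI.2
      linarith
    exact absurd (key ts hts hypos hvpos) (not_le.2 hcon)
end

section
/- Let σ̃ : [0,∞) × [0,∞) → [0,∞) satisfy: σ̃(·, t) is nondecreasing for each t, σ̃(s, ·) is nonincreasing for each s, σ̃(0, t) = 0, σ̃ is bounded on bounded sets, continuous at points (0,t), and σ̃(s, t) → 0 as t → ∞ for each fixed s. Extend σ̃(s,t) := σ̃(s,0) for t ∈ [−1,0) and define σ(s, t) := s·e^{−t} + (1/s)·∫_{t−1}^{t} ∫_{s}^{2s} σ̃(ξ, w) dξ dw for s > 0, t ≥ 0, and σ(0, t) := 0. Then σ is of class KL and σ̃(s, t) ≤ σ(s, t) for all s, t ≥ 0. -/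
open Set Filter MeasureTheory intervalIntegral

theorem KL_majorant_construction
    (σ' : ℝ → ℝ → ℝ)
    (hnonneg : ∀ s t : ℝ, 0 ≤ s → 0 ≤ t → 0 ≤ σ' s t)
    (hmono : ∀ t : ℝ, 0 ≤ t → MonotoneOn (fun s => σ' s t) (Ici 0))
    (hanti : ∀ s : ℝ, 0 ≤ s → AntitoneOn (σ' s) (Ici 0))
    (hzero : ∀ t : ℝ, 0 ≤ t → σ' 0 t = 0)
    (hbdd : ∀ S : ℝ, ∃ C : ℝ, ∀ s ∈ Icc (0 : ℝ) S, ∀ t : ℝ, 0 ≤ t → σ' s t ≤ C)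
    (hcont0 : Tendsto (fun s => σ' s 0) (nhdsWithin 0 (Ioi 0)) (nhds 0))
    (hdecay : ∀ s : ℝ, 0 ≤ s → Tendsto (σ' s) atTop (nhds 0))
    (σe : ℝ → ℝ → ℝ)
    (hσe : ∀ s t : ℝ, σe s t = if t < 0 then σ' s 0 else σ' s t)
    (σ : ℝ → ℝ → ℝ)
    (hσ : ∀ s t : ℝ, 0 < s →
      σ s t = s * Real.exp (-t) + (1 / s) * ∫ w in (t - 1)..t, ∫ ξ in s..(2 * s), σe ξ w)
    (hσ0 : ∀ t : ℝ, σ 0 t = 0) :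
    (∀ s t : ℝ, 0 ≤ s → 0 ≤ t → σ' s t ≤ σ s t) ∧
    ContinuousOn (fun p : ℝ × ℝ => σ p.1 p.2) (Ici 0 ×ˢ Ici 0) ∧
    (∀ t : ℝ, 0 ≤ t → StrictMonoOn (fun s => σ s t) (Ici 0) ∧ σ 0 t = 0) ∧
    (∀ s : ℝ, 0 ≤ s → AntitoneOn (σ s) (Ici 0) ∧ Tendsto (σ s) atTop (nhds 0)) := by
  classical
  -- basic facts about σe
  have hσe_nonneg : ∀ s w : ℝ, 0 ≤ s → 0 ≤ σe s w := by
    intro s w hs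
    rw [hσe]
    split_ifs with h
    · exact hnonneg s 0 hs le_rfl
    · exact hnonneg s w hs (not_lt.1 h)
  have hσe_mono : ∀ w : ℝ, MonotoneOn (fun ξ => σe ξ w) (Ici 0) := by
    intro w a ha b hb hab
    simp only [hσe]
    split_ifs with h
    · exact hmono 0 le_rfl ha hb hab
    · exact hmono w (not_lt.1 h) ha hb hab
  have hσe_anti : ∀ s : ℝ, 0 ≤ s → Antitone (σe s) := by
    intro s hs w1 w2 h12
    simp only [hσe]
    split_ifs with h1 h2 h2
    · exact le_rfl
    · exact absurd h12 (by simp only [not_le]; exact lt_of_lt_of_le h1 (not_lt.1 h2))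
    · exact hanti s hs self_mem_Ici (mem_Ici.2 (not_lt.1 h1)) (not_lt.1 h1)
    · exact hanti s hs (mem_Ici.2 (not_lt.1 h2)) (mem_Ici.2 (not_lt.1 h1)) h12
  have hσe_eq : ∀ s t : ℝ, 0 ≤ t → σe s t = σ' s t := by
    intro s t ht; rw [hσe, if_neg (not_lt.2 ht)]
  -- the inner integral G s w = ∫ ξ in s..2s, σe ξ w
  have hGint : ∀ s w : ℝ, 0 ≤ s →
      IntervalIntegrable (fun ξ => σe ξ w) volume s (2*s) := by
    intro s w hs
    refine ((hσe_mono w).mono ?_).intervalIntegrable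
    rw [uIcc_of_le (by linarith)]
    exact fun x hx => le_trans hs hx.1
  have hGconst : ∀ s c : ℝ, (∫ _ in s..(2*s), c) = s * c := by
    intro s c
    rw [intervalIntegral.integral_const, smul_eq_mul]
    ring
  have hG_nonneg : ∀ s w : ℝ, 0 ≤ s → 0 ≤ ∫ ξ in s..(2*s), σe ξ w := by
    intro s w hs
    refine intervalIntegral.integral_nonneg (by linarith) ?_
    exact fun x hx => hσe_nonneg x w (le_trans hs hx.1)
  have hG_le : ∀ s w : ℝ, 0 ≤ s → (∫ ξ in s..(2*s), σe ξ w) ≤ s * σe (2*s) w := by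
    intro s w hs
    rw [← hGconst s (σe (2*s) w)]
    refine intervalIntegral.integral_mono_on (by linarith) (hGint s w hs)
      intervalIntegrable_const ?_
    intro x hx
    exact hσe_mono w (le_trans hs hx.1) (by linarith : (0:ℝ) ≤ 2*s) hx.2
  have hG_ge : ∀ s w : ℝ, 0 ≤ s → s * σe s w ≤ ∫ ξ in s..(2*s), σe ξ w := by
    intro s w hs
    rw [← hGconst s (σe s w)]
    refine intervalIntegral.integral_mono_on (by linarith) intervalIntegrable_const
      (hGint s w hs) ?_
    intro x hx
    exact hσe_mono w hs (le_trans hs hx.1) hx.1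
  have hG_anti : ∀ s : ℝ, 0 ≤ s → Antitone (fun w => ∫ ξ in s..(2*s), σe ξ w) := by
    intro s hs w1 w2 h12
    refine intervalIntegral.integral_mono_on (by linarith) (hGint s w2 hs)
      (hGint s w1 hs) ?_
    intro x hx
    exact hσe_anti x (le_trans hs hx.1) h12
  have hFint : ∀ s a b : ℝ, 0 ≤ s →
      IntervalIntegrable (fun w => ∫ ξ in s..(2*s), σe ξ w) volume a b :=
    fun s a b hs => (hG_anti s hs).intervalIntegrable
  have hF_nonneg : ∀ s t : ℝ, 0 ≤ s →
      0 ≤ ∫ w in (t-1)..t, ∫ ξ in s..(2*s), σe ξ w := by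
    intro s t hs
    exact intervalIntegral.integral_nonneg (by linarith) (fun w _ => hG_nonneg s w hs)
  have hone : ∀ t c : ℝ, (∫ _ in (t-1)..t, c) = c := by
    intro t c
    rw [intervalIntegral.integral_const, smul_eq_mul]
    ring_nf
  have part1 : ∀ s t : ℝ, 0 ≤ s → 0 ≤ t → σ' s t ≤ σ s t := by
    intro s t hs ht
    rcases eq_or_lt_of_le hs with h0 | h0
    · rw [← h0, hzero t ht, hσ0]
    · rw [hσ s t h0]
      have hF : s * σ' s t ≤ ∫ w in (t-1)..t, ∫ ξ in s..(2*s), σe ξ w := by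
        rw [← hone t (s * σ' s t)]
        refine intervalIntegral.integral_mono_on (by linarith) intervalIntegrable_const
          (hFint s _ _ hs) ?_
        intro w hw
        calc s * σ' s t = s * σe s t := by rw [hσe_eq s t ht]
          _ ≤ s * σe s w := mul_le_mul_of_nonneg_left (hσe_anti s hs hw.2) hs
          _ ≤ _ := hG_ge s w hs
      have h2 := mul_le_mul_of_nonneg_left hF (by positivity : (0:ℝ) ≤ 1/s)
      have h3 : (1/s) * (s * σ' s t) = σ' s t := by field_simp
      have h4 : 0 ≤ s * Real.exp (-t) := by positivity
      linarith
  have hGdiv : ∀ s w : ℝ, 0 < s →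
      (1/s) * ∫ ξ in s..(2*s), σe ξ w = ∫ u in (1:ℝ)..2, σe (s*u) w := by
    intro s w hs
    have h := intervalIntegral.smul_integral_comp_mul_left (f := fun ξ => σe ξ w)
      (a := 1) (b := 2) s
    rw [smul_eq_mul, mul_one] at h
    rw [show (2:ℝ)*s = s*2 by ring, ← h]
    field_simp
  have hUint : ∀ s w : ℝ, 0 ≤ s →
      IntervalIntegrable (fun u => σe (s*u) w) volume 1 2 := by
    intro s w hs
    refine MonotoneOn.intervalIntegrable (u := fun u => σe (s*u) w) ?_
    rw [uIcc_of_le (by norm_num : (1:ℝ) ≤ 2)]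
    intro a ha b hb hab
    exact hσe_mono w (by nlinarith [ha.1] : (0:ℝ) ≤ s*a) (by nlinarith [hb.1] : (0:ℝ) ≤ s*b)
      (by nlinarith)
  have part3 : ∀ t : ℝ, 0 ≤ t → StrictMonoOn (fun s => σ s t) (Ici 0) ∧ σ 0 t = 0 := by
    intro t ht
    refine ⟨?_, hσ0 t⟩
    intro a ha b hb hab
    simp only
    rcases eq_or_lt_of_le (mem_Ici.1 ha) with h0 | h0
    · rw [← h0, hσ0, hσ b t (by rw [← h0] at hab; exact hab)]
      have hb' : (0:ℝ) < b := by rw [← h0] at hab; exact hab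
      have := hF_nonneg b t hb'.le
      have : (0:ℝ) ≤ (1/b) * ∫ w in (t-1)..t, ∫ ξ in b..(2*b), σe ξ w := by positivity
      nlinarith [Real.exp_pos (-t)]
    · have hb' : (0:ℝ) < b := lt_trans h0 hab
      rw [hσ a t h0, hσ b t hb']
      have hexp : a * Real.exp (-t) < b * Real.exp (-t) :=
        mul_lt_mul_of_pos_right hab (Real.exp_pos (-t))
      have hint : (1/a) * (∫ w in (t-1)..t, ∫ ξ in a..(2*a), σe ξ w) ≤
          (1/b) * ∫ w in (t-1)..t, ∫ ξ in b..(2*b), σe ξ w := by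
        have ea : (fun w => (1/a) * ∫ ξ in a..(2*a), σe ξ w) =
            fun w => ∫ u in (1:ℝ)..2, σe (a*u) w := funext fun w => hGdiv a w h0
        have eb : (fun w => (1/b) * ∫ ξ in b..(2*b), σe ξ w) =
            fun w => ∫ u in (1:ℝ)..2, σe (b*u) w := funext fun w => hGdiv b w hb'
        rw [← intervalIntegral.integral_const_mul, ← intervalIntegral.integral_const_mul,
          ea, eb]
        refine intervalIntegral.integral_mono_on (by linarith) ?_ ?_ ?_
        · have := (hFint a (t-1) t h0.le).const_mul (1/a)
          rwa [show (fun w => (1/a) * ∫ ξ in a..(2*a), σe ξ w) =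
            fun w => ∫ u in (1:ℝ)..2, σe (a*u) w from ea] at this
        · have := (hFint b (t-1) t hb'.le).const_mul (1/b)
          rwa [show (fun w => (1/b) * ∫ ξ in b..(2*b), σe ξ w) =
            fun w => ∫ u in (1:ℝ)..2, σe (b*u) w from eb] at this
        · intro w _
          refine intervalIntegral.integral_mono_on (by norm_num) (hUint a w h0.le)
            (hUint b w hb'.le) ?_
          intro u hu
          exact hσe_mono w (by nlinarith [hu.1] : (0:ℝ) ≤ a*u)
            (by nlinarith [hu.1] : (0:ℝ) ≤ b*u) (by nlinarith [hu.1])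
      linarith
  have part4 : ∀ s : ℝ, 0 ≤ s → AntitoneOn (σ s) (Ici 0) ∧ Tendsto (σ s) atTop (nhds 0) := by
    intro s hs
    rcases eq_or_lt_of_le hs with h0 | h0
    · have hc : σ s = fun _ => (0:ℝ) := funext fun t => by rw [← h0, hσ0]
      constructor
      · intro t1 _ t2 _ _; rw [hc]
      · rw [hc]; exact tendsto_const_nhds
    · constructor
      · intro t1 ht1 t2 ht2 h12
        rw [hσ s t1 h0, hσ s t2 h0]
        have hexp : Real.exp (-t2) ≤ Real.exp (-t1) := Real.exp_le_exp.2 (by linarith)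
        have hshift : (∫ w in (t1-1)..t1,
            (fun w => ∫ ξ in s..(2*s), σe ξ w) (w + (t2 - t1))) =
            ∫ w in (t2-1)..t2, ∫ ξ in s..(2*s), σe ξ w := by
          have h := intervalIntegral.integral_comp_add_right (a := t1 - 1) (b := t1)
            (fun w => ∫ ξ in s..(2*s), σe ξ w) (t2 - t1)
          exact h.trans (by congr 1 <;> ring)
        have hFle : (∫ w in (t2-1)..t2, ∫ ξ in s..(2*s), σe ξ w) ≤
            ∫ w in (t1-1)..t1, ∫ ξ in s..(2*s), σe ξ w := by
          rw [← hshift]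
          refine intervalIntegral.integral_mono_on (by linarith) ?_ (hFint s _ _ h0.le) ?_
          · exact ((hG_anti s h0.le).comp_monotone
              (fun x y hxy => by simpa using add_le_add_right hxy (t2-t1))).intervalIntegrable
          · intro w _
            exact hG_anti s h0.le (le_add_of_nonneg_right (by linarith))
        have h1 : s * Real.exp (-t2) ≤ s * Real.exp (-t1) :=
          mul_le_mul_of_nonneg_left hexp h0.le
        have h2 : (1/s) * (∫ w in (t2-1)..t2, ∫ ξ in s..(2*s), σe ξ w) ≤
            (1/s) * ∫ w in (t1-1)..t1, ∫ ξ in s..(2*s), σe ξ w :=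
          mul_le_mul_of_nonneg_left hFle (by positivity)
        linarith
      · have hub : ∀ t : ℝ, 1 ≤ t →
            σ s t ≤ s * Real.exp (-t) + σ' (2*s) (t-1) := by
          intro t htt
          rw [hσ s t h0]
          have hF1 : (∫ w in (t-1)..t, ∫ ξ in s..(2*s), σe ξ w) ≤
              ∫ ξ in s..(2*s), σe ξ (t-1) := by
            rw [← hone t (∫ ξ in s..(2*s), σe ξ (t-1))]
            refine intervalIntegral.integral_mono_on (by linarith) (hFint s _ _ h0.le)
              intervalIntegrable_const ?_
            intro w hw
            exact hG_anti s h0.le hw.1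
          have hF2 : (∫ ξ in s..(2*s), σe ξ (t-1)) ≤ s * σe (2*s) (t-1) :=
            hG_le s (t-1) h0.le
          have hF3 : σe (2*s) (t-1) = σ' (2*s) (t-1) := hσe_eq _ _ (by linarith)
          have h2 : (1/s) * (∫ w in (t-1)..t, ∫ ξ in s..(2*s), σe ξ w) ≤
              (1/s) * (s * σ' (2*s) (t-1)) := by
            rw [← hF3]
            exact mul_le_mul_of_nonneg_left (hF1.trans hF2) (by positivity)
          have h3 : (1/s) * (s * σ' (2*s) (t-1)) = σ' (2*s) (t-1) := by field_simp
          linarith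
        have hlb : ∀ t : ℝ, 0 ≤ σ s t := by
          intro t
          rw [hσ s t h0]
          have := hF_nonneg s t h0.le
          positivity
        have hg : Tendsto (fun t => s * Real.exp (-t) + σ' (2*s) (t-1)) atTop (nhds 0) := by
          have h1 : Tendsto (fun t : ℝ => s * Real.exp (-t)) atTop (nhds (s * 0)) :=
            (Real.tendsto_exp_neg_atTop_nhds_zero).const_mul s
          have h2 : Tendsto (fun t : ℝ => σ' (2*s) (t-1)) atTop (nhds 0) :=
            (hdecay (2*s) (by linarith)).comp (tendsto_atTop_add_const_right atTop (-1)
              tendsto_id)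
          have := h1.add h2
          simpa using this
        refine squeeze_zero' ?_ ?_ hg
        · exact Eventually.of_forall hlb
        · filter_upwards [eventually_ge_atTop (1:ℝ)] with t htt using hub t htt
  -- general interval integrability on nonneg intervals
  have hMint : ∀ a b w : ℝ, 0 ≤ a → 0 ≤ b →
      IntervalIntegrable (fun ξ => σe ξ w) volume a b := by
    intro a b w ha hb
    refine ((hσe_mono w).mono ?_).intervalIntegrable
    intro x hx
    rcases le_total a b with h | h
    · rw [uIcc_of_le h] at hx; exact le_trans ha hx.1
    · rw [uIcc_of_ge h] at hx; exact le_trans hb hx.1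
  have hσe_le0 : ∀ x w : ℝ, 0 ≤ x → σe x w ≤ σ' x 0 := by
    intro x w hx
    rw [hσe]
    split_ifs with h
    · exact le_rfl
    · exact hanti x hx self_mem_Ici (mem_Ici.2 (not_lt.1 h)) (not_lt.1 h)
  have hCbound : ∀ S : ℝ, 0 ≤ S → ∃ C : ℝ, 0 ≤ C ∧
      ∀ ξ ∈ Icc (0:ℝ) S, ∀ w : ℝ, σe ξ w ≤ C := by
    intro S hS
    obtain ⟨C, hC⟩ := hbdd S
    refine ⟨C, le_trans (hnonneg 0 0 le_rfl le_rfl) (hC 0 ⟨le_rfl, hS⟩ 0 le_rfl), ?_⟩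
    intro ξ hξ w
    rw [hσe]
    split_ifs with h
    · exact hC ξ hξ 0 le_rfl
    · exact hC ξ hξ w (not_lt.1 h)
  have hσ_nonneg : ∀ s t : ℝ, 0 ≤ s → 0 ≤ σ s t := by
    intro s t hs
    rcases eq_or_lt_of_le hs with h0 | h0
    · rw [← h0, hσ0]
    · rw [hσ s t h0]
      have := hF_nonneg s t h0.le
      positivity
  have hub0 : ∀ s t : ℝ, 0 ≤ s → 0 ≤ t → σ s t ≤ s + σ' (2*s) 0 := by
    intro s t hs ht
    rcases eq_or_lt_of_le hs with h0 | h0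
    · rw [← h0, hσ0, show (2:ℝ)*0 = 0 by ring, hzero 0 le_rfl]
      norm_num
    · rw [hσ s t h0]
      have h1 : s * Real.exp (-t) ≤ s := by
        have : Real.exp (-t) ≤ 1 := Real.exp_le_one_iff.2 (by linarith)
        nlinarith
      have hF : (∫ w in (t-1)..t, ∫ ξ in s..(2*s), σe ξ w) ≤ s * σ' (2*s) 0 := by
        rw [← hone t (s * σ' (2*s) 0)]
        refine intervalIntegral.integral_mono_on (by linarith) (hFint s _ _ h0.le)
          intervalIntegrable_const ?_
        intro w _
        calc (∫ ξ in s..(2*s), σe ξ w) ≤ s * σe (2*s) w := hG_le s w h0.le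
          _ ≤ s * σ' (2*s) 0 :=
            mul_le_mul_of_nonneg_left (hσe_le0 (2*s) w (by linarith)) h0.le
      have h2 : (1/s) * (∫ w in (t-1)..t, ∫ ξ in s..(2*s), σe ξ w) ≤
          (1/s) * (s * σ' (2*s) 0) := mul_le_mul_of_nonneg_left hF (by positivity)
      have h3 : (1/s) * (s * σ' (2*s) 0) = σ' (2*s) 0 := by field_simp
      linarith
  have hIci : (Ici (0:ℝ)) = insert 0 (Ioi 0) := by
    ext x
    simp [le_iff_lt_or_eq, or_comm, eq_comm]
  have hB : Tendsto (fun x : ℝ => x + σ' (2*x) 0) (nhdsWithin 0 (Ici 0)) (nhds 0) := by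
    rw [hIci, nhdsWithin_insert, tendsto_sup]
    constructor
    · rw [tendsto_pure_left]
      intro u hu
      have hv : (0:ℝ) + σ' (2*0) 0 = 0 := by
        rw [mul_zero, hzero 0 le_rfl, add_zero]
      show (0:ℝ) + σ' (2*0) 0 ∈ u
      rw [hv]
      exact mem_of_mem_nhds hu
    · have h2s : Tendsto (fun x : ℝ => 2*x) (nhdsWithin 0 (Ioi 0)) (nhdsWithin 0 (Ioi 0)) := by
        apply tendsto_nhdsWithin_of_tendsto_nhds_of_eventually_within
        · have hc : Continuous fun x : ℝ => 2*x := continuous_const.mul continuous_id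
          have h : Tendsto (fun x : ℝ => 2*x) (nhds (0:ℝ)) (nhds 0) := by
            simpa using hc.tendsto 0
          exact h.mono_left nhdsWithin_le_nhds
        · filter_upwards [self_mem_nhdsWithin] with x hx
          exact mul_pos two_pos (mem_Ioi.1 hx)
      have h1 := hcont0.comp h2s
      have h0' : Tendsto (fun x : ℝ => x) (nhdsWithin 0 (Ioi 0)) (nhds 0) :=
        tendsto_id.mono_left nhdsWithin_le_nhds
      simpa using h0'.add h1
  have part2 : ContinuousOn (fun p : ℝ × ℝ => σ p.1 p.2) (Ici 0 ×ˢ Ici 0) := by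
    intro p₀ hp₀
    have hp1 : (0:ℝ) ≤ p₀.1 := hp₀.1
    have hp2 : (0:ℝ) ≤ p₀.2 := hp₀.2
    rcases eq_or_lt_of_le hp1 with h0 | h0
    · -- boundary case s₀ = 0
      show Tendsto _ _ _
      have hval : (fun p : ℝ × ℝ => σ p.1 p.2) p₀ = 0 := by
        show σ p₀.1 p₀.2 = 0
        rw [← h0, hσ0]
      rw [hval]
      have hfst : Tendsto (fun p : ℝ × ℝ => p.1)
          (nhdsWithin p₀ (Ici 0 ×ˢ Ici 0)) (nhdsWithin 0 (Ici 0)) := by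
        apply tendsto_nhdsWithin_of_tendsto_nhds_of_eventually_within
        · have h := (continuous_fst.tendsto p₀).mono_left
            (nhdsWithin_le_nhds (s := (Ici 0 ×ˢ Ici 0 : Set (ℝ × ℝ))))
          rwa [← h0] at h
        · filter_upwards [self_mem_nhdsWithin] with p hp using hp.1
      refine squeeze_zero' ?_ ?_ (hB.comp hfst)
      · filter_upwards [self_mem_nhdsWithin] with p hp using hσ_nonneg p.1 p.2 hp.1
      · filter_upwards [self_mem_nhdsWithin] with p hp using hub0 p.1 p.2 hp.1 hp.2
    · -- interior case s₀ > 0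
      set S : ℝ := p₀.1 + 1 with hSdef
      have hS0 : (0:ℝ) ≤ 2*S := by simp only [hSdef]; linarith
      obtain ⟨C, hC0, hC⟩ := hCbound (2*S) hS0
      -- segment estimate for the inner variable
      have hIub : ∀ a b w : ℝ, 0 ≤ a → a ≤ b → b ≤ 2*S →
          (∫ ξ in a..b, σe ξ w) ∈ Icc 0 (C*(b-a)) := by
        intro a b w ha hab hb
        constructor
        · exact intervalIntegral.integral_nonneg hab
            (fun x hx => hσe_nonneg x w (le_trans ha hx.1))
        · have h1 : (∫ _ in a..b, C) = C * (b - a) := by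
            rw [intervalIntegral.integral_const, smul_eq_mul]; ring
          rw [← h1]
          refine intervalIntegral.integral_mono_on hab (hMint a b w ha (le_trans ha hab))
            intervalIntegrable_const ?_
          intro x hx
          exact hC x ⟨le_trans ha hx.1, le_trans hx.2 hb⟩ w
      have hGbd : ∀ s w : ℝ, 0 ≤ s → s ≤ S →
          (∫ ξ in s..(2*s), σe ξ w) ∈ Icc 0 (S*C) := by
        intro s w hs hsS
        refine ⟨hG_nonneg s w hs, ?_⟩
        have h1 := hG_le s w hs
        have h2 : σe (2*s) w ≤ C := hC (2*s) ⟨by linarith, by linarith⟩ w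
        nlinarith
      have hGdiff : ∀ s s' w : ℝ, 0 ≤ s → s ≤ s' → s' ≤ S →
          |(∫ ξ in s'..(2*s'), σe ξ w) - ∫ ξ in s..(2*s), σe ξ w| ≤ 2*C*(s'-s) := by
        intro s s' w hs hss' hsS
        have hs' : (0:ℝ) ≤ s' := le_trans hs hss'
        have e1 := intervalIntegral.integral_add_adjacent_intervals
          (hMint s s' w hs hs') (hMint s' (2*s') w hs' (by linarith))
        have e2 := intervalIntegral.integral_add_adjacent_intervals
          (hMint s (2*s) w hs (by linarith)) (hMint (2*s) (2*s') w (by linarith) (by linarith))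
        have A := hIub (2*s) (2*s') w (by linarith) (by linarith) (by linarith)
        have B := hIub s s' w hs hss' (by linarith)
        have hr : C*(2*s'-2*s) = 2*(C*(s'-s)) := by ring
        rw [abs_le]
        constructor
        · nlinarith [A.1, A.2, B.1, B.2]
        · nlinarith [A.1, A.2, B.1, B.2]
      have hFs : ∀ a b t : ℝ, 0 ≤ a → a ≤ S → 0 ≤ b → b ≤ S →
          |(∫ w in (t-1)..t, ∫ ξ in a..(2*a), σe ξ w) -
           ∫ w in (t-1)..t, ∫ ξ in b..(2*b), σe ξ w| ≤ 2*C*|a-b| := by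
        have key : ∀ a b t : ℝ, 0 ≤ a → a ≤ b → b ≤ S →
            |(∫ w in (t-1)..t, ∫ ξ in b..(2*b), σe ξ w) -
             ∫ w in (t-1)..t, ∫ ξ in a..(2*a), σe ξ w| ≤ 2*C*(b-a) := by
          intro a b t ha hab hbS
          have hb : (0:ℝ) ≤ b := le_trans ha hab
          rw [← intervalIntegral.integral_sub (hFint b _ _ hb) (hFint a _ _ ha)]
          have h := intervalIntegral.norm_integral_le_of_norm_le_const
            (C := 2*C*(b-a)) (a := t-1) (b := t)
            (f := fun w => (∫ ξ in b..(2*b), σe ξ w) - ∫ ξ in a..(2*a), σe ξ w) ?_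
          · rw [Real.norm_eq_abs] at h
            have : |t - (t-1)| = 1 := by norm_num
            rw [this, mul_one] at h
            exact h
          · intro w _
            rw [Real.norm_eq_abs]
            exact hGdiff a b w ha hab hbS
        intro a b t ha haS hb hbS
        rcases le_total a b with h | h
        · rw [abs_sub_comm, abs_of_nonpos (by linarith : a - b ≤ 0)]
          have := key a b t ha h hbS
          linarith [this]
        · rw [abs_of_nonneg (by linarith : (0:ℝ) ≤ a - b)]
          have := key b a t hb h haS
          linarith [this]
      have hFt : ∀ s a b : ℝ, 0 ≤ s → s ≤ S →
          |(∫ w in (a-1)..a, ∫ ξ in s..(2*s), σe ξ w) -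
           ∫ w in (b-1)..b, ∫ ξ in s..(2*s), σe ξ w| ≤ S*C*|a-b| := by
        have hseg : ∀ s a b : ℝ, 0 ≤ s → s ≤ S → a ≤ b →
            (∫ w in a..b, ∫ ξ in s..(2*s), σe ξ w) ∈ Icc 0 (S*C*(b-a)) := by
          intro s a b hs hsS hab
          constructor
          · exact intervalIntegral.integral_nonneg hab (fun w _ => hG_nonneg s w hs)
          · have h1 : (∫ _ in a..b, S*C) = S*C*(b-a) := by
              rw [intervalIntegral.integral_const, smul_eq_mul]; ring
            rw [← h1]
            exact intervalIntegral.integral_mono_on hab (hFint s _ _ hs)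
              intervalIntegrable_const (fun w _ => (hGbd s w hs hsS).2)
        have key : ∀ s a b : ℝ, 0 ≤ s → s ≤ S → a ≤ b →
            |(∫ w in (b-1)..b, ∫ ξ in s..(2*s), σe ξ w) -
             ∫ w in (a-1)..a, ∫ ξ in s..(2*s), σe ξ w| ≤ S*C*(b-a) := by
          intro s a b hs hsS hab
          have e1 := intervalIntegral.integral_add_adjacent_intervals
            (hFint s (a-1) a hs) (hFint s a b hs)
          have e2 := intervalIntegral.integral_add_adjacent_intervals
            (hFint s (a-1) (b-1) hs) (hFint s (b-1) b hs)
          have A := hseg s a b hs hsS hab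
          have B := hseg s (a-1) (b-1) hs hsS (by linarith)
          have hr : S*C*(b-1-(a-1)) = S*C*(b-a) := by ring
          rw [hr] at B
          rw [abs_le]
          exact ⟨by linarith [A.1, A.2, B.1, B.2], by linarith [A.1, A.2, B.1, B.2]⟩
        intro s a b hs hsS
        rcases le_total a b with h | h
        · rw [abs_sub_comm, abs_of_nonpos (by linarith : a - b ≤ 0)]
          have := key s a b hs hsS h
          linarith [this]
        · rw [abs_of_nonneg (by linarith : (0:ℝ) ≤ a - b)]
          have := key s b a hs hsS h
          linarith [this]
      -- continuity of the double integral at p₀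
      have hcontF : Tendsto (fun p : ℝ × ℝ => ∫ w in (p.2-1)..p.2, ∫ ξ in p.1..(2*p.1), σe ξ w)
          (nhds p₀) (nhds (∫ w in (p₀.2-1)..p₀.2, ∫ ξ in p₀.1..(2*p₀.1), σe ξ w)) := by
        rw [tendsto_iff_dist_tendsto_zero]
        have hev : ∀ᶠ p : ℝ × ℝ in nhds p₀, p.1 ∈ Ioo (0:ℝ) S := by
          have hopen : IsOpen {p : ℝ × ℝ | p.1 ∈ Ioo (0:ℝ) S} :=
            isOpen_Ioo.preimage continuous_fst
          exact hopen.mem_nhds ⟨h0, by simp only [hSdef]; linarith⟩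
        refine squeeze_zero' (g := fun p : ℝ × ℝ => 2*C*|p.1-p₀.1| + S*C*|p.2-p₀.2|)
          (Eventually.of_forall fun p => dist_nonneg) ?_ ?_
        · filter_upwards [hev] with p hp
          rw [Real.dist_eq]
          calc |(∫ w in (p.2-1)..p.2, ∫ ξ in p.1..(2*p.1), σe ξ w) -
                ∫ w in (p₀.2-1)..p₀.2, ∫ ξ in p₀.1..(2*p₀.1), σe ξ w|
              ≤ |(∫ w in (p.2-1)..p.2, ∫ ξ in p.1..(2*p.1), σe ξ w) -
                ∫ w in (p.2-1)..p.2, ∫ ξ in p₀.1..(2*p₀.1), σe ξ w| +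
                |(∫ w in (p.2-1)..p.2, ∫ ξ in p₀.1..(2*p₀.1), σe ξ w) -
                ∫ w in (p₀.2-1)..p₀.2, ∫ ξ in p₀.1..(2*p₀.1), σe ξ w| := abs_sub_le _ _ _
            _ ≤ 2*C*|p.1-p₀.1| + S*C*|p.2-p₀.2| := by
                refine add_le_add ?_ ?_
                · exact hFs p.1 p₀.1 p.2 hp.1.le hp.2.le h0.le (by simp only [hSdef]; linarith)
                · exact hFt p₀.1 p.2 p₀.2 h0.le (by simp only [hSdef]; linarith)
        · have hc : Continuous fun p : ℝ × ℝ => 2*C*|p.1-p₀.1| + S*C*|p.2-p₀.2| :=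
            (continuous_const.mul (continuous_fst.sub continuous_const).abs).add
              (continuous_const.mul (continuous_snd.sub continuous_const).abs)
          have h := hc.tendsto p₀
          simpa using h
      have hg : ContinuousAt (fun p : ℝ × ℝ =>
          p.1 * Real.exp (-p.2) + (1/p.1) * ∫ w in (p.2-1)..p.2, ∫ ξ in p.1..(2*p.1), σe ξ w) p₀ := by
        have h1 : ContinuousAt (fun p : ℝ × ℝ => p.1) p₀ := continuous_fst.continuousAt
        have h2 : ContinuousAt (fun p : ℝ × ℝ => Real.exp (-p.2)) p₀ :=
          (Real.continuous_exp.comp continuous_snd.neg).continuousAt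
        have h3 : ContinuousAt (fun p : ℝ × ℝ => (1:ℝ)/p.1) p₀ :=
          ContinuousAt.div continuousAt_const h1 (ne_of_gt h0)
        exact (h1.mul h2).add (h3.mul hcontF)
      have heq : (fun p : ℝ × ℝ => σ p.1 p.2) =ᶠ[nhds p₀] (fun p : ℝ × ℝ =>
          p.1 * Real.exp (-p.2) + (1/p.1) * ∫ w in (p.2-1)..p.2, ∫ ξ in p.1..(2*p.1), σe ξ w) := by
        have hopen : IsOpen {p : ℝ × ℝ | 0 < p.1} := isOpen_lt continuous_const continuous_fst
        filter_upwards [hopen.mem_nhds h0] with p hp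
        exact hσ p.1 p.2 hp
      exact (hg.congr heq.symm).continuousWithinAt
  exact ⟨part1, part2, part3, part4⟩
end
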